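/- Every symmetry ℓ ∈ Aut(L_f(V)) of the lattice of f-closed subspaces extends uniquely to an order-preserving bijection Φ_ℓ of the lattice L(V) of ALL subspaces of V, given by Φ_ℓ(M) = ⋃{ℓ(L) | L ⊆ M, L finite-dimensional}. -/

import Mathlib

/-- The orthogonal companion `M⊥ = {v | f(v,x) = 0 for all x ∈ M}`. -/
def perpSet {K V : Type*} [DivisionRing K] [AddCommGroup V] [Module K V]
    (f : V → V → K) (M : Set V) : Set V :=
  {v | ∀ x ∈ M, f v x = 0}

/-- A subspace `M` of `V` is `f`-closed if `M = M⊥⊥`. -/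
def IsClosedSub {K V : Type*} [DivisionRing K] [AddCommGroup V] [Module K V]
    (f : V → V → K) (M : Submodule K V) : Prop :=
  perpSet f (perpSet f (M : Set V)) = (M : Set V)


section Aux

variable {K V : Type*} [DivisionRing K] [AddCommGroup V] [Module K V]
    (f : V → V → K)

/-- A finite-dimensional subspace admits no strictly increasing `ℕ`-chain of subspaces below
it. -/
theorem noChain_of_fin (F : Submodule K V) (hF : Module.Finite K F)
    (c : ℕ → {M : Submodule K V // IsClosedSub f M})
    (hc : StrictMono fun n => (c n).1) (hle : ∀ n, (c n).1 ≤ F) : False := by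
  have hlt : ∀ n, (c n).1 < F := fun n =>
    lt_of_lt_of_le (hc (Nat.lt_succ_self n)) (hle (n + 1))
  haveI : FiniteDimensional K F := hF
  have hmono : StrictMono fun n => Module.finrank K (c n).1 := by
    intro n m hnm
    haveI : FiniteDimensional K (c m).1 := Submodule.finiteDimensional_of_le (hle m)
    exact Submodule.finrank_lt_finrank_of_lt (hc hnm)
  have h2 : Module.finrank K F ≤ Module.finrank K (c (Module.finrank K F)).1 := by
    calc Module.finrank K F ≤ Module.finrank K F + Module.finrank K (c 0).1 := by omega
    _ ≤ _ := by
        have : ∀ n, n + Module.finrank K (c 0).1 ≤ Module.finrank K (c n).1 := by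
          intro n; induction n with
          | zero => simp
          | succ k ih => have h3 := hmono (Nat.lt_succ_self k); simp only [Nat.succ_eq_add_one] at h3; omega
        exact this _
  exact absurd (Submodule.finrank_lt_finrank_of_lt (hlt _)) (not_lt.2 h2)

/-- Conversely, if there is no strictly increasing chain of `f`-closed subspaces below `F`,
then `F` is finite dimensional. -/
theorem fin_of_noChain (hfin : ∀ L : Submodule K V, Module.Finite K L → IsClosedSub f L)
    (F : Submodule K V)
    (h : ∀ c : ℕ → {M : Submodule K V // IsClosedSub f M},
      StrictMono (fun n => (c n).1) → (∀ n, (c n).1 ≤ F) → False) :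
    Module.Finite K F := by
  by_contra hF
  have step : ∀ L : {L : Submodule K V // Module.Finite K L ∧ L ≤ F},
      ∃ L' : {L : Submodule K V // Module.Finite K L ∧ L ≤ F}, L.1 < L'.1 := by
    rintro ⟨L, hLfin, hLF⟩
    have hne : L ≠ F := by rintro rfl; exact hF hLfin
    obtain ⟨x, hxF, hxL⟩ := SetLike.exists_of_lt (lt_of_le_of_ne hLF hne)
    haveI : FiniteDimensional K L := hLfin
    refine ⟨⟨L ⊔ Submodule.span K {x}, inferInstance,
      sup_le hLF (Submodule.span_le.2 (by simpa using hxF))⟩, ?_⟩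
    show L < L ⊔ Submodule.span K {x}
    refine lt_of_le_of_ne le_sup_left (fun hEq => hxL ?_)
    have : x ∈ L ⊔ Submodule.span K {x} :=
      (le_sup_right : Submodule.span K {x} ≤ _) (Submodule.mem_span_singleton_self x)
    rwa [← hEq] at this
  choose next hnext using step
  let g : ℕ → {L : Submodule K V // Module.Finite K L ∧ L ≤ F} :=
    fun n => Nat.rec ⟨⊥, inferInstance, bot_le⟩ (fun _ L => next L) n
  have hg : StrictMono fun n => (g n).1 := strictMono_nat_of_lt_succ (fun n => hnext (g n))
  exact h (fun n => ⟨(g n).1, hfin _ (g n).2.1⟩) hg (fun n => (g n).2.2)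

end Aux

section Ext

variable {K V : Type*} [DivisionRing K] [AddCommGroup V] [Module K V]
    (f : V → V → K)
    (hfin : ∀ L : Submodule K V, Module.Finite K L → IsClosedSub f L)
    (e : {M : Submodule K V // IsClosedSub f M} ≃ {M : Submodule K V // IsClosedSub f M})
    (he : ∀ M N : {M : Submodule K V // IsClosedSub f M},
      M.1 ≤ N.1 ↔ (e M).1 ≤ (e N).1)

/-- The extension of `e` to all subspaces. -/
def extMap (M : Submodule K V) : Submodule K V :=
  ⨆ L : {L : Submodule K V // Module.Finite K L ∧ L ≤ M}, (e ⟨L.1, hfin L.1 L.2.1⟩).1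

instance extMap_nonempty' (M : Submodule K V) :
    Nonempty {L : Submodule K V // Module.Finite K L ∧ L ≤ M} :=
  ⟨⟨⊥, inferInstance, bot_le⟩⟩

include hfin he

/-- The inverse of an order-preserving bijection is order-preserving. -/
theorem hord_symm : ∀ M N : {M : Submodule K V // IsClosedSub f M},
    M.1 ≤ N.1 ↔ (e.symm M).1 ≤ (e.symm N).1 := by
  intro M N
  have h := he (e.symm M) (e.symm N)
  simp only [Equiv.apply_symm_apply] at h
  exact h.symm

/-- A symmetry of the lattice of closed subspaces maps finite-dimensional subspaces to
finite-dimensional subspaces. -/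
theorem keyfin (M : {M : Submodule K V // IsClosedSub f M}) (hM : Module.Finite K M.1) :
    Module.Finite K (e M).1 := by
  have hs := hord_symm f hfin e he
  apply fin_of_noChain f hfin
  intro c hc hle
  refine noChain_of_fin f M.1 hM (fun n => e.symm (c n)) ?_ ?_
  · intro n m hnm
    have h1 := hc hnm
    rw [lt_iff_le_not_ge] at h1 ⊢
    exact ⟨(hs (c n) (c m)).1 h1.1, fun hh => h1.2 ((hs (c m) (c n)).2 hh)⟩
  · intro n
    have h2 := (hs (c n) (e M)).1 (hle n)
    simpa using h2

theorem extMap_directed (M : Submodule K V) :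
    Directed (· ≤ ·) fun L : {L : Submodule K V // Module.Finite K L ∧ L ≤ M} =>
      ((e ⟨L.1, hfin L.1 L.2.1⟩).1 : Submodule K V) := by
  rintro ⟨L₁, h₁, hm₁⟩ ⟨L₂, h₂, hm₂⟩
  haveI : FiniteDimensional K L₁ := h₁
  haveI : FiniteDimensional K L₂ := h₂
  exact ⟨⟨L₁ ⊔ L₂, inferInstance, sup_le hm₁ hm₂⟩,
    (he _ _).1 le_sup_left, (he _ _).1 le_sup_right⟩

theorem extMap_mono {M N : Submodule K V} (h : M ≤ N) :
    extMap f hfin e M ≤ extMap f hfin e N :=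
  iSup_le fun L => le_iSup
    (fun L' : {L' : Submodule K V // Module.Finite K L' ∧ L' ≤ N} =>
      ((e ⟨L'.1, hfin L'.1 L'.2.1⟩).1 : Submodule K V))
    ⟨L.1, L.2.1, le_trans L.2.2 h⟩

theorem extMap_agree (M : {M : Submodule K V // IsClosedSub f M}) :
    extMap f hfin e M.1 = (e M).1 := by
  apply le_antisymm
  · exact iSup_le fun L => (he ⟨L.1, hfin L.1 L.2.1⟩ M).1 L.2.2
  · intro x hx
    have hs := hord_symm f hfin e he
    set S : Submodule K V := Submodule.span K {x} with hS
    have hSfin : Module.Finite K S := inferInstance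
    set sc : {M : Submodule K V // IsClosedSub f M} := ⟨S, hfin S hSfin⟩ with hsc
    have hSle : sc.1 ≤ (e M).1 := Submodule.span_le.2 (by simpa using hx)
    set L := e.symm sc with hL
    have hLfin : Module.Finite K L.1 := keyfin f hfin e.symm (hord_symm f hfin e he) sc hSfin
    have hLM : L.1 ≤ M.1 := by
      have h2 := (hs sc (e M)).1 hSle
      simpa using h2
    have hmem : x ∈ (e ⟨L.1, hfin L.1 hLfin⟩).1 := by
      have hLL : (⟨L.1, hfin L.1 hLfin⟩ : {M : Submodule K V // IsClosedSub f M}) = L :=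
        Subtype.ext rfl
      rw [hLL, hL, Equiv.apply_symm_apply]
      exact Submodule.mem_span_singleton_self x
    exact le_iSup
      (fun L' : {L' : Submodule K V // Module.Finite K L' ∧ L' ≤ M.1} =>
        ((e ⟨L'.1, hfin L'.1 L'.2.1⟩).1 : Submodule K V))
      ⟨L.1, hLfin, hLM⟩ hmem

theorem extMap_leftinv (M : Submodule K V) :
    extMap f hfin e.symm (extMap f hfin e M) = M := by
  have hs := hord_symm f hfin e he
  apply le_antisymm
  · refine iSup_le ?_
    rintro ⟨F, hFfin, hFle⟩
    have hcomp : IsCompactElement F :=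
      (Submodule.fg_iff_compact F).1 (Module.Finite.iff_fg.1 hFfin)
    obtain ⟨y, hy, hFy⟩ :=
      (CompleteLattice.isCompactElement_iff_le_of_directed_sSup_le _ F).1 hcomp
        (Set.range fun L : {L : Submodule K V // Module.Finite K L ∧ L ≤ M} =>
          ((e ⟨L.1, hfin L.1 L.2.1⟩).1 : Submodule K V))
        (Set.range_nonempty _) ((extMap_directed f hfin e he M).directedOn_range)
        (by rw [sSup_range]; exact hFle)
    obtain ⟨L, rfl⟩ := hy
    have h2 := (hs ⟨F, hfin F hFfin⟩ (e ⟨L.1, hfin L.1 L.2.1⟩)).1 hFy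
    simp only [Equiv.symm_apply_apply] at h2
    exact le_trans h2 L.2.2
  · intro x hx
    set S : Submodule K V := Submodule.span K {x} with hS
    have hSfin : Module.Finite K S := inferInstance
    set sc : {M : Submodule K V // IsClosedSub f M} := ⟨S, hfin S hSfin⟩ with hsc
    have hSle : S ≤ M := Submodule.span_le.2 (by simpa using hx)
    have hGfin : Module.Finite K (e sc).1 := keyfin f hfin e he sc hSfin
    have hGle : (e sc).1 ≤ extMap f hfin e M := by
      have := le_iSup
        (fun L' : {L' : Submodule K V // Module.Finite K L' ∧ L' ≤ M} =>
          ((e ⟨L'.1, hfin L'.1 L'.2.1⟩).1 : Submodule K V))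
        ⟨S, hSfin, hSle⟩
      exact this
    have hmem : x ∈ (e.symm ⟨(e sc).1, hfin (e sc).1 hGfin⟩).1 := by
      have hLL : (⟨(e sc).1, hfin (e sc).1 hGfin⟩ : {M : Submodule K V // IsClosedSub f M}) =
          e sc := Subtype.ext rfl
      rw [hLL, Equiv.symm_apply_apply]
      exact Submodule.mem_span_singleton_self x
    exact le_iSup
      (fun F : {F : Submodule K V // Module.Finite K F ∧ F ≤ extMap f hfin e M} =>
        ((e.symm ⟨F.1, hfin F.1 F.2.1⟩).1 : Submodule K V))
      ⟨(e sc).1, hGfin, hGle⟩ hmem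

end Ext
/-- Every symmetry `ℓ` of the lattice of `f`-closed subspaces (order- and
`⊥`-preserving bijection) extends uniquely to an order-preserving bijection `Φ` of the
lattice of ALL subspaces of `V`, given by
`Φ(M) = ⋃ {ℓ(L) | L ⊆ M, L finite-dimensional}`. -/
theorem stmt_13 {K V : Type*} [DivisionRing K] [StarRing K]
    [AddCommGroup V] [Module K V]
    (f : V → V → K)
    (hadd : ∀ u v w : V, f (u + v) w = f u w + f v w)
    (hsmul : ∀ (c : K) (u v : V), f (c • u) v = c * f u v)
    (hherm : ∀ u v : V, star (f u v) = f v u)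
    (hdefinite : ∀ v : V, f v v = 0 → v = 0)
    (hfin : ∀ L : Submodule K V, Module.Finite K L → IsClosedSub f L)
    (ℓ : {M : Submodule K V // IsClosedSub f M} ≃ {M : Submodule K V // IsClosedSub f M})
    (hord : ∀ M N : {M : Submodule K V // IsClosedSub f M},
      M.1 ≤ N.1 ↔ (ℓ M).1 ≤ (ℓ N).1)
    (hperp : ∀ M N : {M : Submodule K V // IsClosedSub f M},
      perpSet f (M.1 : Set V) = (N.1 : Set V) →
      perpSet f ((ℓ M).1 : Set V) = ((ℓ N).1 : Set V)) :
    ∃ Φ : Submodule K V ≃o Submodule K V,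
      (∀ M : {M : Submodule K V // IsClosedSub f M}, Φ M.1 = (ℓ M).1) ∧
      (∀ M : Submodule K V, (Φ M : Set V) =
        ⋃ L : {L : Submodule K V // Module.Finite K L ∧ L ≤ M},
          ((ℓ ⟨L.1, hfin L.1 L.2.1⟩).1 : Set V)) ∧
      (∀ Φ' : Submodule K V ≃o Submodule K V,
        (∀ M : {M : Submodule K V // IsClosedSub f M}, Φ' M.1 = (ℓ M).1) → Φ' = Φ) := by
  have hs := hord_symm f hfin ℓ hord
  have linv : ∀ M : Submodule K V, extMap f hfin ℓ.symm (extMap f hfin ℓ M) = M :=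
    extMap_leftinv f hfin ℓ hord
  have rinv : ∀ M : Submodule K V, extMap f hfin ℓ (extMap f hfin ℓ.symm M) = M := by
    intro M
    have h := extMap_leftinv f hfin ℓ.symm hs M
    rwa [Equiv.symm_symm] at h
  refine ⟨⟨⟨extMap f hfin ℓ, extMap f hfin ℓ.symm, linv, rinv⟩, ?_⟩, ?_, ?_, ?_⟩
  · intro M N
    constructor
    · intro h
      have h2 := extMap_mono f hfin ℓ.symm hs h
      simp only [Equiv.coe_fn_mk] at h2
      rwa [linv, linv] at h2
    · exact fun h => extMap_mono f hfin ℓ hord h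
  · intro M
    exact extMap_agree f hfin ℓ hord M
  · intro M
    show ((extMap f hfin ℓ M : Submodule K V) : Set V) = _
    exact Submodule.coe_iSup_of_directed _ (extMap_directed f hfin ℓ hord M)
  · intro Φ' hΦ'
    have key : ∀ M : Submodule K V, Φ' M = extMap f hfin ℓ M := by
      intro M
      apply le_antisymm
      · intro x hx
        set S : Submodule K V := Submodule.span K {x} with hS
        have hSfin : Module.Finite K S := inferInstance
        set sc : {M : Submodule K V // IsClosedSub f M} := ⟨S, hfin S hSfin⟩ with hsc
        set L := ℓ.symm sc with hL
        have hLfin : Module.Finite K L.1 := keyfin f hfin ℓ.symm hs sc hSfin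
        have hΦL : Φ' L.1 = S := by
          have h1 := hΦ' L
          rw [hL] at h1
          rw [Equiv.apply_symm_apply] at h1
          exact h1
        have hLM : L.1 ≤ M := by
          rw [← Φ'.le_iff_le, hΦL]
          exact Submodule.span_le.2 (by simpa using hx)
        have hmem : x ∈ (ℓ ⟨L.1, hfin L.1 hLfin⟩).1 := by
          have hLL : (⟨L.1, hfin L.1 hLfin⟩ : {M : Submodule K V // IsClosedSub f M}) = L :=
            Subtype.ext rfl
          rw [hLL, hL, Equiv.apply_symm_apply]
          exact Submodule.mem_span_singleton_self x
        exact le_iSup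
          (fun L' : {L' : Submodule K V // Module.Finite K L' ∧ L' ≤ M} =>
            ((ℓ ⟨L'.1, hfin L'.1 L'.2.1⟩).1 : Submodule K V))
          ⟨L.1, hLfin, hLM⟩ hmem
      · refine iSup_le ?_
        rintro ⟨L, hLfin, hLM⟩
        have h1 := hΦ' ⟨L, hfin L hLfin⟩
        calc (ℓ ⟨L, hfin L hLfin⟩).1 = Φ' L := h1.symm
        _ ≤ Φ' M := Φ'.monotone hLM
    exact OrderIso.ext (funext key)
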